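/- Let k ≥ 1 and let τ be a balanced binary hierarchy over a finite index set J with |J| = 2^k, i.e., a binary hierarchy in which the two children of every nonsingleton cluster have equal cardinality. Then the number F of partitions of J compatible with τ satisfies (√2)^(2^k) ≤ F ≤ (4/5)·(√(5/2))^(2^k). (Equivalently, the sequence defined by F(1) = 2 and F(k+1) = 1 + F(k)², which counts these partitions, satisfies these bounds for all k ≥ 1.) -/

import Mathlib

open Finset

/-- A binary hierarchy over a finite index set `J`, encoded by its cluster set:
a laminar family of nonempty subsets of `J` containing the root `J` and all
singletons, in which every nonsingleton member is the disjoint union of exactly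
two members (its children). -/
structure BinaryHierarchy (J : Type*) [DecidableEq J] [Fintype J] where
  clusters : Finset (Finset J)
  root_mem : (Finset.univ : Finset J) ∈ clusters
  singleton_mem : ∀ j : J, ({j} : Finset J) ∈ clusters
  nonempty_of_mem : ∀ I ∈ clusters, I.Nonempty
  laminar : ∀ I ∈ clusters, ∀ K ∈ clusters, I ⊆ K ∨ K ⊆ I ∨ Disjoint I K
  binary_split : ∀ I ∈ clusters, 1 < I.card →
    ∃ L ∈ clusters, ∃ R ∈ clusters, Disjoint L R ∧ L ∪ R = I

variable {J : Type*} [DecidableEq J] [Fintype J]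

/-- The parent of a cluster `I`: the smallest member of the (laminar) family strictly
containing `I`, realized as the intersection of all members strictly containing `I`
(these form a chain in a laminar family). -/
def BinaryHierarchy.parent (τ : BinaryHierarchy J) (I : Finset J) : Finset J :=
  (τ.clusters.filter fun K => I ⊂ K).inf id

/-- The sibling (local complement) of a cluster `I`. -/
def BinaryHierarchy.sibling (τ : BinaryHierarchy J) (I : Finset J) : Finset J :=
  τ.parent I \ I

/-- `P` is a partition of the finite set `K`: its blocks are nonempty, pairwise
disjoint, and their union is `K`. -/
def IsPartitionOf (P : Finset (Finset J)) (K : Finset J) : Prop :=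
  (∀ B ∈ P, B.Nonempty) ∧
  (∀ B ∈ P, ∀ B' ∈ P, B ≠ B' → Disjoint B B') ∧
  P.sup id = K

/-- A compatible partition: a partition of `K` all of whose blocks are clusters. -/
def CompPart (τ : BinaryHierarchy J) (K : Finset J) (P : Finset (Finset J)) : Prop :=
  IsPartitionOf P K ∧ ∀ B ∈ P, B ∈ τ.clusters

lemma comp_block_subset {P : Finset (Finset J)} {K : Finset J}
    (hP : IsPartitionOf P K) {B : Finset J} (hB : B ∈ P) : B ⊆ K := by
  rw [← hP.2.2]
  exact Finset.le_sup (f := id) hB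

lemma comp_eq_singleton {τ : BinaryHierarchy J} {I : Finset J} {P : Finset (Finset J)}
    (hP : CompPart τ I P) (hIP : I ∈ P) : P = {I} := by
  apply Finset.eq_singleton_iff_unique_mem.mpr
  refine ⟨hIP, fun B hB => ?_⟩
  by_contra hne
  have hd := hP.1.2.1 B hB I hIP hne
  have hBs : B ⊆ I := comp_block_subset hP.1 hB
  obtain ⟨x, hx⟩ := hP.1.1 B hB
  exact Finset.disjoint_left.mp hd hx (hBs hx)

lemma singleton_comp {τ : BinaryHierarchy J} {I : Finset J}
    (hI : I ∈ τ.clusters) (hne : I.Nonempty) : CompPart τ I ({I} : Finset (Finset J)) := by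
  refine ⟨⟨?_, ?_, ?_⟩, ?_⟩
  · intro B hB; rw [Finset.mem_singleton] at hB; exact hB ▸ hne
  · intro B hB B' hB' hneq
    rw [Finset.mem_singleton] at hB hB'
    exact absurd (hB.trans hB'.symm) hneq
  · simp
  · intro B hB; rw [Finset.mem_singleton] at hB; exact hB ▸ hI

lemma count_of_card_one (τ : BinaryHierarchy J) {I : Finset J}
    (hI : I ∈ τ.clusters) (hcard : I.card = 1) :
    Nat.card {P : Finset (Finset J) // CompPart τ I P} = 1 := by
  have hne : I.Nonempty := Finset.card_pos.mp (by omega)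
  have huniq : ∀ P : {P : Finset (Finset J) // CompPart τ I P},
      P = ⟨{I}, singleton_comp hI hne⟩ := by
    rintro ⟨P, hP⟩
    apply Subtype.ext
    obtain ⟨x, hx⟩ := hne
    have hxs : x ∈ P.sup id := by rw [hP.1.2.2]; exact hx
    rw [Finset.mem_sup] at hxs
    obtain ⟨B, hB, hxB⟩ := hxs
    have hBI : B ⊆ I := comp_block_subset hP.1 hB
    have hBeq : B = I := Finset.eq_of_subset_of_card_le hBI
      (by rw [hcard]; exact Finset.card_pos.mpr ⟨x, hxB⟩)
    exact comp_eq_singleton hP (hBeq ▸ hB)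
  have : Nonempty {P : Finset (Finset J) // CompPart τ I P} :=
    ⟨⟨{I}, singleton_comp hI hne⟩⟩
  have : Subsingleton {P : Finset (Finset J) // CompPart τ I P} :=
    ⟨fun a b => (huniq a).trans (huniq b).symm⟩
  exact Nat.card_eq_one_iff_unique.mpr ⟨‹_›, ‹_›⟩

section Split

variable {τ : BinaryHierarchy J} {I L R : Finset J}

lemma block_subset_child (hL : L ∈ τ.clusters) (hR : R ∈ τ.clusters)
    (hdis : Disjoint L R) (hun : L ∪ R = I)
    {P : Finset (Finset J)} (hP : CompPart τ I P) (hIP : I ∉ P)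
    {B : Finset J} (hB : B ∈ P) : B ⊆ L ∨ B ⊆ R := by
  have hBc : B ∈ τ.clusters := hP.2 B hB
  have hBI : B ⊆ I := comp_block_subset hP.1 hB
  rcases τ.laminar B hBc L hL with h | h | h
  · exact Or.inl h
  · rcases τ.laminar B hBc R hR with h2 | h2 | h2
    · obtain ⟨x, hx⟩ := τ.nonempty_of_mem L hL
      exact absurd (h2 (h hx)) (Finset.disjoint_left.mp hdis hx)
    · have hIB : I ⊆ B := by rw [← hun]; exact Finset.union_subset h h2
      have : B = I := Finset.Subset.antisymm hBI hIB
      exact absurd (this ▸ hB) hIP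
    · left
      intro x hx
      have hxI := hBI hx
      rw [← hun, Finset.mem_union] at hxI
      rcases hxI with h3 | h3
      · exact h3
      · exact absurd h3 (Finset.disjoint_left.mp h2 hx)
  · right
    intro x hx
    have hxI := hBI hx
    rw [← hun, Finset.mem_union] at hxI
    rcases hxI with h3 | h3
    · exact absurd hx (Finset.disjoint_right.mp h h3)
    · exact h3

lemma filter_comp (hL : L ∈ τ.clusters) (hR : R ∈ τ.clusters)
    (hdis : Disjoint L R) (hun : L ∪ R = I)
    {P : Finset (Finset J)} (hP : CompPart τ I P) (hIP : I ∉ P) :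
    CompPart τ L (P.filter (· ⊆ L)) := by
  refine ⟨⟨fun B hB => hP.1.1 B (Finset.mem_filter.mp hB).1,
          fun B hB B' hB' hne =>
            hP.1.2.1 B (Finset.mem_filter.mp hB).1 B' (Finset.mem_filter.mp hB').1 hne, ?_⟩,
         fun B hB => hP.2 B (Finset.mem_filter.mp hB).1⟩
  apply Finset.Subset.antisymm
  · intro x hx
    rw [Finset.mem_sup] at hx
    obtain ⟨B, hB, hxB⟩ := hx
    exact (Finset.mem_filter.mp hB).2 hxB
  · intro x hx
    have hxI : x ∈ I := by rw [← hun]; exact Finset.mem_union_left _ hx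
    have hxs : x ∈ P.sup id := by rw [hP.1.2.2]; exact hxI
    rw [Finset.mem_sup] at hxs
    obtain ⟨B, hB, hxB⟩ := hxs
    rcases block_subset_child hL hR hdis hun hP hIP hB with h | h
    · rw [Finset.mem_sup]
      exact ⟨B, Finset.mem_filter.mpr ⟨hB, h⟩, hxB⟩
    · exact absurd (h hxB) (Finset.disjoint_left.mp hdis hx)

lemma union_comp (hI : I ∈ τ.clusters) (hdis : Disjoint L R) (hun : L ∪ R = I)
    {PL PR : Finset (Finset J)} (hPL : CompPart τ L PL) (hPR : CompPart τ R PR) :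
    CompPart τ I (PL ∪ PR) := by
  have hsubL : ∀ B ∈ PL, B ⊆ L := fun B hB => comp_block_subset hPL.1 hB
  have hsubR : ∀ B ∈ PR, B ⊆ R := fun B hB => comp_block_subset hPR.1 hB
  refine ⟨⟨?_, ?_, ?_⟩, ?_⟩
  · intro B hB
    rcases Finset.mem_union.mp hB with h | h
    exacts [hPL.1.1 B h, hPR.1.1 B h]
  · intro B hB B' hB' hne
    rcases Finset.mem_union.mp hB with h | h <;> rcases Finset.mem_union.mp hB' with h' | h'
    · exact hPL.1.2.1 B h B' h' hne
    · exact hdis.mono (hsubL B h) (hsubR B' h')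
    · exact (hdis.mono (hsubL B' h') (hsubR B h)).symm
    · exact hPR.1.2.1 B h B' h' hne
  · rw [Finset.sup_union, hPL.1.2.2, hPR.1.2.2, Finset.sup_eq_union, hun]
  · intro B hB
    rcases Finset.mem_union.mp hB with h | h
    exacts [hPL.2 B h, hPR.2 B h]

lemma root_not_mem_union (hdis : Disjoint L R) (hun : L ∪ R = I)
    (hLne : L.Nonempty) (hRne : R.Nonempty)
    {PL PR : Finset (Finset J)} (hPL : CompPart τ L PL) (hPR : CompPart τ R PR) :
    I ∉ PL ∪ PR := by
  intro h
  rcases Finset.mem_union.mp h with h | h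
  · have hIL : I ⊆ L := comp_block_subset hPL.1 h
    obtain ⟨x, hx⟩ := hRne
    have hxI : x ∈ I := by rw [← hun]; exact Finset.mem_union_right _ hx
    exact Finset.disjoint_left.mp hdis (hIL hxI) hx
  · have hIR : I ⊆ R := comp_block_subset hPR.1 h
    obtain ⟨x, hx⟩ := hLne
    have hxI : x ∈ I := by rw [← hun]; exact Finset.mem_union_left _ hx
    exact Finset.disjoint_left.mp hdis hx (hIR hxI)

lemma filter_union_left (hdis : Disjoint L R)
    {PL PR : Finset (Finset J)} (hPL : CompPart τ L PL) (hPR : CompPart τ R PR) :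
    (PL ∪ PR).filter (· ⊆ L) = PL := by
  ext B
  simp only [Finset.mem_filter, Finset.mem_union]
  constructor
  · rintro ⟨h | h, hBL⟩
    · exact h
    · obtain ⟨x, hx⟩ := hPR.1.1 B h
      exact absurd (hBL hx) (Finset.disjoint_right.mp hdis (comp_block_subset hPR.1 h hx))
  · intro h
    exact ⟨Or.inl h, comp_block_subset hPL.1 h⟩

lemma count_split (hI : I ∈ τ.clusters) (hL : L ∈ τ.clusters) (hR : R ∈ τ.clusters)
    (hdis : Disjoint L R) (hun : L ∪ R = I) :
    Nat.card {P : Finset (Finset J) // CompPart τ I P} =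
      1 + Nat.card {P : Finset (Finset J) // CompPart τ L P} *
          Nat.card {P : Finset (Finset J) // CompPart τ R P} := by
  have hLne := τ.nonempty_of_mem L hL
  have hRne := τ.nonempty_of_mem R hR
  have hun' : R ∪ L = I := by rw [Finset.union_comm]; exact hun
  have e : {P : Finset (Finset J) // CompPart τ I P} ≃
      Option ({P : Finset (Finset J) // CompPart τ L P} ×
              {P : Finset (Finset J) // CompPart τ R P}) :=
  { toFun := fun P =>
      if h : I ∈ P.1 then none
      else some (⟨P.1.filter (· ⊆ L), filter_comp hL hR hdis hun P.2 h⟩,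
                 ⟨P.1.filter (· ⊆ R), filter_comp hR hL hdis.symm hun' P.2 h⟩)
    invFun := fun o => o.elim ⟨{I}, singleton_comp hI (τ.nonempty_of_mem I hI)⟩
      (fun q => ⟨q.1.1 ∪ q.2.1, union_comp hI hdis hun q.1.2 q.2.2⟩)
    left_inv := fun P => by
      dsimp only
      by_cases h : I ∈ P.1
      · rw [dif_pos h]
        exact Subtype.ext (comp_eq_singleton P.2 h).symm
      · rw [dif_neg h]
        apply Subtype.ext
        show P.1.filter (· ⊆ L) ∪ P.1.filter (· ⊆ R) = P.1
        ext B
        simp only [Finset.mem_union, Finset.mem_filter]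
        constructor
        · rintro (⟨hB, _⟩ | ⟨hB, _⟩) <;> exact hB
        · intro hB
          rcases block_subset_child hL hR hdis hun P.2 h hB with hs | hs
          · exact Or.inl ⟨hB, hs⟩
          · exact Or.inr ⟨hB, hs⟩
    right_inv := fun o => by
      dsimp only
      match o with
      | none =>
        show (if h : I ∈ ({I} : Finset (Finset J)) then _ else _) = none
        rw [dif_pos (Finset.mem_singleton_self I)]
      | some (⟨PL, hPL⟩, ⟨PR, hPR⟩) =>
        have hnm : I ∉ PL ∪ PR := root_not_mem_union hdis hun hLne hRne hPL hPR
        show (if h : I ∈ PL ∪ PR then _ else _) = _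
        rw [dif_neg hnm]
        have h1 : (PL ∪ PR).filter (· ⊆ L) = PL := filter_union_left hdis hPL hPR
        have h2 : (PL ∪ PR).filter (· ⊆ R) = PR := by
          rw [Finset.union_comm]
          exact filter_union_left hdis.symm hPR hPL
        exact congrArg some (Prod.ext (Subtype.ext h1) (Subtype.ext h2)) }
  rw [Nat.card_congr e, Finite.card_option, Nat.card_prod]
  ring

end Split

/-- The partition-counting sequence: `F 0 = 1`, `F (n+1) = 1 + F n ^ 2`. -/
def Fcnt : ℕ → ℕ
  | 0 => 1
  | n + 1 => 1 + (Fcnt n) ^ 2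

lemma count_eq (τ : BinaryHierarchy J)
    (hbal : ∀ I ∈ τ.clusters, 1 < I.card →
      ∃ L ∈ τ.clusters, ∃ R ∈ τ.clusters,
        Disjoint L R ∧ L ∪ R = I ∧ L.card = R.card) :
    ∀ m : ℕ, ∀ I ∈ τ.clusters, I.card = 2 ^ m →
      Nat.card {P : Finset (Finset J) // CompPart τ I P} = Fcnt m := by
  intro m
  induction m with
  | zero =>
    intro I hI hc
    exact count_of_card_one τ hI (by simpa using hc)
  | succ n ih =>
    intro I hI hc
    have hgt : 1 < I.card := by
      rw [hc]
      calc 1 < 2 := one_lt_two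
        _ ≤ 2 ^ (n + 1) := Nat.le_self_pow (Nat.succ_ne_zero n) 2
    obtain ⟨L, hL, R, hR, hdis, hun, hcardeq⟩ := hbal I hI hgt
    have hsum : L.card + R.card = I.card := by
      rw [← hun, Finset.card_union_of_disjoint hdis]
    have hc' : I.card = 2 ^ n * 2 := by rw [hc, pow_succ]
    have hcardL : L.card = 2 ^ n := by omega
    have hcardR : R.card = 2 ^ n := by omega
    rw [count_split hI hL hR hdis hun, ih L hL hcardL, ih R hR hcardR]
    simp [Fcnt, sq]

lemma Fcnt_bounds (k : ℕ) (hk : 1 ≤ k) :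
    (2 : ℝ) ^ (2 ^ (k - 1)) ≤ (Fcnt k : ℝ) ∧
      (Fcnt k : ℝ) ≤ (4 / 5) * (5 / 2) ^ (2 ^ (k - 1)) := by
  induction k, hk using Nat.le_induction with
  | base => norm_num [Fcnt]
  | succ n hn ih =>
    obtain ⟨h1, h2⟩ := ih
    have hF0 : (0 : ℝ) ≤ (Fcnt n : ℝ) := Nat.cast_nonneg _
    have hexp : 2 ^ (n + 1 - 1) = 2 ^ (n - 1) * 2 := by
      have : n - 1 + 1 = n := by omega
      rw [Nat.add_sub_cancel]
      nth_rewrite 1 [← this]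
      rw [pow_succ]
    have hFval : (Fcnt (n + 1) : ℝ) = 1 + (Fcnt n : ℝ) ^ 2 := by
      show ((1 + (Fcnt n) ^ 2 : ℕ) : ℝ) = _
      push_cast
      ring
    have hB : (5 / 2 : ℝ) ≤ (5 / 2 : ℝ) ^ (2 ^ (n - 1)) :=
      le_self_pow₀ (by norm_num) (pow_pos (by norm_num : (0:ℕ) < 2) _).ne'
    constructor
    · rw [hexp, pow_mul, hFval]
      have : ((2 : ℝ) ^ (2 ^ (n - 1))) ^ 2 ≤ (Fcnt n : ℝ) ^ 2 :=
        pow_le_pow_left₀ (by positivity) h1 2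
      linarith
    · rw [hexp, pow_mul, hFval]
      nlinarith [h2, hB, hF0, sq_nonneg ((4 / 5) * (5 / 2 : ℝ) ^ (2 ^ (n - 1)) - (Fcnt n : ℝ))]

/-- for a balanced binary hierarchy over `2^k` leaves (`k ≥ 1`), the
number `F` of compatible partitions satisfies
`(√2)^(2^k) ≤ F ≤ (4/5)·(√(5/2))^(2^k)`. -/
theorem balanced_partition_count_bounds (k : ℕ) (hk : 1 ≤ k)
    (τ : BinaryHierarchy J) (hJ : Fintype.card J = 2 ^ k)
    (hbal : ∀ I ∈ τ.clusters, 1 < I.card →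
      ∃ L ∈ τ.clusters, ∃ R ∈ τ.clusters,
        Disjoint L R ∧ L ∪ R = I ∧ L.card = R.card) :
    Real.sqrt 2 ^ (2 ^ k) ≤
      (Nat.card {P : Finset (Finset J) //
          IsPartitionOf P (Finset.univ : Finset J) ∧ ∀ B ∈ P, B ∈ τ.clusters} : ℝ) ∧
    (Nat.card {P : Finset (Finset J) //
        IsPartitionOf P (Finset.univ : Finset J) ∧ ∀ B ∈ P, B ∈ τ.clusters} : ℝ) ≤
      (4 / 5) * Real.sqrt (5 / 2) ^ (2 ^ k) := by
  have hcount : Nat.card {P : Finset (Finset J) //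
      IsPartitionOf P (Finset.univ : Finset J) ∧ ∀ B ∈ P, B ∈ τ.clusters} = Fcnt k :=
    count_eq τ hbal k Finset.univ τ.root_mem (by rw [Finset.card_univ, hJ])
  have h2k : 2 ^ k = 2 * 2 ^ (k - 1) := by
    have : k - 1 + 1 = k := by omega
    nth_rewrite 1 [← this]
    rw [pow_succ]
    ring
  have hs2 : Real.sqrt 2 ^ (2 ^ k) = (2 : ℝ) ^ (2 ^ (k - 1)) := by
    rw [h2k, pow_mul, Real.sq_sqrt (by norm_num : (0:ℝ) ≤ 2)]
  have hs52 : Real.sqrt (5 / 2) ^ (2 ^ k) = (5 / 2 : ℝ) ^ (2 ^ (k - 1)) := by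
    rw [h2k, pow_mul, Real.sq_sqrt (by norm_num : (0:ℝ) ≤ 5 / 2)]
  rw [hcount, hs2, hs52]
  exact Fcnt_bounds k hk
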